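/- Let δ be a positive integer divisible by 6 and let Q ∈ ℤ[T]. For an integer t with Q(t) ≠ 0, define h(t) = ∏ (−3/p), the product running over all primes p not dividing δ such that ν_p(Q(t)) ≡ 2 or 4 (mod 6). Let t₁, t₂ be integers, c a nonzero integer, and l, l' squarefree integers such that Q(t₁) = c²·l with gcd(c,l) = 1 and Q(t₂) = c²·l' with gcd(c,l') = 1. Then h(t₁) = h(t₂). -/

import Mathlib

/-- The corrective term `h(t) = ∏ (-3/p)`, the product running over the primes `p ∤ δ`
with `ν_p(Q(t)) ≡ 2, 4 (mod 6)` (types `II`, `II*`, `IV`, `IV*`). -/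
def corrTerm (δ : ℕ) (Q : Polynomial ℤ) (t : ℤ) : ℤ :=
  ∏ p ∈ ((Q.eval t).natAbs.primeFactors.filter
    (fun p => ¬ p ∣ δ ∧
      (padicValInt p (Q.eval t) % 6 = 2 ∨ padicValInt p (Q.eval t) % 6 = 4))),
    if hp : p.Prime then @legendreSym p ⟨hp⟩ (-3) else 1

lemma key_val {p : ℕ} (hp : p.Prime) {c l : ℤ} (hc : c ≠ 0) (hl : Squarefree l)
    (hcl : Int.gcd c l = 1) :
    (p ∣ (c ^ 2 * l).natAbs ∧
      (padicValInt p (c ^ 2 * l) % 6 = 2 ∨ padicValInt p (c ^ 2 * l) % 6 = 4)) ↔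
    ((p : ℤ) ∣ c ∧ ((2 * padicValInt p c) % 6 = 2 ∨ (2 * padicValInt p c) % 6 = 4)) := by
  haveI : Fact p.Prime := ⟨hp⟩
  have hl0 : l ≠ 0 := hl.ne_zero
  have hc2 : c ^ 2 ≠ 0 := pow_ne_zero _ hc
  have hvmul : padicValInt p (c ^ 2 * l) = 2 * padicValInt p c + padicValInt p l := by
    rw [padicValInt.mul hc2 hl0, sq, padicValInt.mul hc hc, two_mul]
  by_cases hpl : (p : ℤ) ∣ l
  · -- p ∣ l, hence p ∤ c, valuation of l is 1
    have hpc : ¬ (p : ℤ) ∣ c := by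
      intro hpc
      have : (p : ℤ) ∣ Int.gcd c l := Int.dvd_coe_gcd hpc hpl
      rw [hcl] at this
      exact hp.one_lt.ne' (Nat.eq_one_of_dvd_one (by exact_mod_cast this))
    have hvc : padicValInt p c = 0 := by
      simp only [padicValInt]
      exact padicValNat.eq_zero_of_not_dvd (fun h => hpc ((Int.natCast_dvd).mpr h))
    have hvl : padicValInt p l = 1 := by
      have h1 : 1 ≤ padicValInt p l := by
        have := (padicValInt_dvd_iff 1 l).mp (by simpa using hpl)
        tauto
      have h2 : padicValInt p l < 2 := by
        by_contra h
        push_neg at h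
        have : (p : ℤ) ^ 2 ∣ l := (padicValInt_dvd_iff 2 l).mpr (Or.inr h)
        have : ((p : ℤ) * p) ∣ l := by rwa [← sq]
        exact (Nat.prime_iff_prime_int.mp hp).not_unit (hl _ this)
      omega
    rw [hvmul, hvc, hvl]
    constructor
    · rintro ⟨-, h⟩; omega
    · rintro ⟨h, -⟩; exact absurd h hpc
  · -- p ∤ l
    have hvl : padicValInt p l = 0 := by
      simp only [padicValInt]
      exact padicValNat.eq_zero_of_not_dvd (fun h => hpl ((Int.natCast_dvd).mpr h))
    rw [hvmul, hvl, add_zero]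
    constructor
    · rintro ⟨hdvd, hcond⟩
      have hvpos : 0 < padicValInt p c := by omega
      have : (p : ℤ) ^ 1 ∣ c := (padicValInt_dvd_iff 1 c).mpr (Or.inr hvpos)
      exact ⟨by simpa using this, hcond⟩
    · rintro ⟨hdvd, hcond⟩
      refine ⟨?_, hcond⟩
      rw [← Int.natCast_dvd]
      exact dvd_mul_of_dvd_left (Dvd.dvd.pow hdvd two_ne_zero) l

/-- Invariance of the corrective term when the square parts agree (`q₀ = 1` case). -/
theorem stmt_16 (δ : ℕ) (hδ : 0 < δ) (h6 : 6 ∣ δ) (Q : Polynomial ℤ)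
    (t₁ t₂ c l l' : ℤ) (hc : c ≠ 0) (hl : Squarefree l) (hl' : Squarefree l')
    (h1 : Q.eval t₁ = c ^ 2 * l) (hcl : Int.gcd c l = 1)
    (h2 : Q.eval t₂ = c ^ 2 * l') (hcl' : Int.gcd c l' = 1) :
    corrTerm δ Q t₁ = corrTerm δ Q t₂ := by
  unfold corrTerm
  rw [h1, h2]
  congr 1
  ext p
  simp only [Finset.mem_filter, Nat.mem_primeFactors]
  constructor
  · rintro ⟨⟨hp, hdvd, hne⟩, hδp, hcond⟩
    have hK := (key_val hp hc hl hcl).mp ⟨hdvd, hcond⟩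
    have hK' := (key_val hp hc hl' hcl').mpr hK
    have hne' : (c ^ 2 * l').natAbs ≠ 0 := by
      simp [Int.natAbs_eq_zero, pow_ne_zero, hc, hl'.ne_zero]
    exact ⟨⟨hp, hK'.1, hne'⟩, hδp, hK'.2⟩
  · rintro ⟨⟨hp, hdvd, hne⟩, hδp, hcond⟩
    have hK := (key_val hp hc hl' hcl').mp ⟨hdvd, hcond⟩
    have hK' := (key_val hp hc hl hcl).mpr hK
    have hne' : (c ^ 2 * l).natAbs ≠ 0 := by
      simp [Int.natAbs_eq_zero, pow_ne_zero, hc, hl.ne_zero]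
    exact ⟨⟨hp, hK'.1, hne'⟩, hδp, hK'.2⟩
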